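/- arXiv:1010.3535 — 3 statements merged into one kernel-verified Lean document; each statement's English description precedes it below -/
import Mathlib

section
/- Conversely, if x ∈ K_s and for some p ≥ 0 there is a sequence of p-points (xᵏ) with xᵏ → x and L_p(xᵏ) → ∞, then π_m(x) ∈ ω(c) for every m ≥ 0. (Backward direction of Lemma 2.2.) -/
open Set Filter Topology

noncomputable section

/-- The tent map with slope `s`. -/
def tent (s x : ℝ) : ℝ := min (s * x) (s * (1 - x))

/-- The inverse limit `K_s = lim←([0, s/2], T_s)`, coded as sequences `x : ℕ → ℝ`
where `x n` represents the coordinate `x_{-n}`. -/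
def InvLim (s : ℝ) : Set (ℕ → ℝ) :=
  {x | (∀ n, x n ∈ Icc (0:ℝ) (s / 2)) ∧ ∀ n, tent s (x (n + 1)) = x n}

/-- The metric `d(x, y) = Σ_{n ≤ 0} 2ⁿ |x_n − y_n|` on the inverse limit. -/
def D (s : ℝ) (x y : InvLim s) : ℝ :=
  ∑' n : ℕ, (2 : ℝ)⁻¹ ^ n * |x.val n - y.val n|

/-- The omega-limit set of the critical point `c = 1/2` under `T_s`: the set of
accumulation points of the orbit `{cₙ : n ≥ 1}`. -/
def omegaC (s : ℝ) : Set ℝ :=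
  {y | ∀ ε > (0:ℝ), ∀ N : ℕ, ∃ n ≥ N, 1 ≤ n ∧ |(tent s)^[n] (1 / 2) - y| < ε}

lemma invlim_iterate (s : ℝ) (y : ℕ → ℝ) (hy : ∀ n, tent s (y (n + 1)) = y n)
    (m : ℕ) : ∀ j : ℕ, (tent s)^[j] (y (m + j)) = y m := by
  intro j
  induction j with
  | zero => simp
  | succ j ih =>
    rw [Function.iterate_succ_apply, show m + (j + 1) = (m + j) + 1 by ring,
      hy (m + j), ih]

/-- Backward direction of Lemma 2.2: if there is a sequence of `p`-points `xᵏ → x`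
with `p`-levels `L_p(xᵏ) → ∞`, then every coordinate of `x` lies in `ω(c)`. -/
theorem coords_in_omega_of_p_point_limit (s : ℝ) (hs : s ∈ Set.Ioc (1:ℝ) 2)
    (x : InvLim s) (p : ℕ) (xk : ℕ → InvLim s) (l : ℕ → ℕ)
    (hpp : ∀ k, (xk k).val (p + l k) = 1 / 2 ∧ ∀ l' < l k, (xk k).val (p + l') ≠ 1 / 2)
    (hconv : Tendsto xk atTop (𝓝 x)) (hlev : Tendsto l atTop atTop) :
    ∀ m : ℕ, x.val m ∈ omegaC s := by
  intro m ε hε N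
  have hcoord : Tendsto (fun k => (xk k).val m) atTop (𝓝 (x.val m)) := by
    have h1 : Tendsto (fun k => (xk k).val) atTop (𝓝 x.val) :=
      (continuous_subtype_val.tendsto x).comp hconv
    exact (tendsto_pi_nhds.mp h1) m
  obtain ⟨K1, hK1⟩ := Metric.tendsto_atTop.mp hcoord ε hε
  obtain ⟨K2, hK2⟩ := (tendsto_atTop_atTop.mp hlev) (N + m + 1)
  set k := max K1 K2 with hk
  have hlk : l k ≥ N + m + 1 := hK2 k (le_max_right _ _)
  have hd : dist ((xk k).val m) (x.val m) < ε := hK1 k (le_max_left _ _)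
  refine ⟨p + l k - m, by omega, by omega, ?_⟩
  have heq : (xk k).val m = (tent s)^[p + l k - m] (1 / 2) := by
    have := invlim_iterate s (xk k).val (xk k).2.2 m (p + l k - m)
    rw [show m + (p + l k - m) = p + l k by omega, (hpp k).1] at this
    exact this.symm
  rw [← heq]
  simpa [Real.dist_eq] using hd
end
end

section
/- For s ∈ (1, 2], for every ε > 0 the space K_s = lim←([0, s/2], T_s) admits a finite open cover {ℓ¹, ..., ℓⁿ} by sets of diameter < ε such that ℓⁱ ∩ ℓʲ ≠ ∅ if and only if |i − j| ≤ 1; that is, K_s is chainable. -/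
open Set Filter Topology

set_option maxHeartbeats 1000000

noncomputable section

/-- The tent map is 2-Lipschitz when `0 ≤ s ≤ 2`. -/
lemma tent_lip {s : ℝ} (h0 : 0 ≤ s) (h2 : s ≤ 2) (a b : ℝ) :
    |tent s a - tent s b| ≤ 2 * |a - b| := by
  have H := abs_min_sub_min_le_max (s*a) (s*(1-a)) (s*b) (s*(1-b))
  have e1 : |s*a - s*b| = s * |a-b| := by
    rw [← mul_sub, abs_mul, abs_of_nonneg h0]
  have e2 : |s*(1-a) - s*(1-b)| = s * |a-b| := by
    rw [show s*(1-a) - s*(1-b) = s*(b-a) by ring, abs_mul, abs_of_nonneg h0, abs_sub_comm]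
  unfold tent
  calc |min (s*a) (s*(1-a)) - min (s*b) (s*(1-b))| ≤ max |s*a - s*b| |s*(1-a) - s*(1-b)| := H
    _ = s * |a - b| := by rw [e1, e2, max_self]
    _ ≤ 2 * |a - b| := mul_le_mul_of_nonneg_right h2 (abs_nonneg _)

lemma tent_mem_Icc {s : ℝ} (hs : s ∈ Ioc (1:ℝ) 2) {a : ℝ} (ha : a ∈ Icc (0:ℝ) (s/2)) :
    tent s a ∈ Icc (0:ℝ) (s/2) := by
  obtain ⟨h1, h2⟩ := hs
  obtain ⟨ha0, ha1⟩ := ha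
  constructor
  · apply le_min <;> nlinarith
  · rcases le_or_gt a (1/2) with h | h
    · exact (min_le_left _ _).trans (by nlinarith)
    · exact (min_le_right _ _).trans (by nlinarith)

lemma div_mem_Icc {s : ℝ} (hs : s ∈ Ioc (1:ℝ) 2) {a : ℝ} (ha : a ∈ Icc (0:ℝ) (s/2)) :
    a / s ∈ Icc (0:ℝ) (s/2) := by
  obtain ⟨h1, h2⟩ := hs
  obtain ⟨ha0, ha1⟩ := ha
  have hs0 : (0:ℝ) < s := by linarith
  constructor
  · positivity
  · rw [div_le_iff₀ hs0]; nlinarith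

lemma tent_div {s : ℝ} (hs : s ∈ Ioc (1:ℝ) 2) {a : ℝ} (ha : a ∈ Icc (0:ℝ) (s/2)) :
    tent s (a / s) = a := by
  obtain ⟨h1, h2⟩ := hs
  obtain ⟨ha0, ha1⟩ := ha
  have hs0 : s ≠ 0 := by linarith
  unfold tent
  rw [mul_div_cancel₀ _ hs0, show s * (1 - a / s) = s - s * (a / s) by ring,
    mul_div_cancel₀ _ hs0]
  exact min_eq_left (by linarith)

lemma coord_le {s : ℝ} (hs : s ∈ Ioc (1:ℝ) 2) (x y : InvLim s) (n k : ℕ) :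
    |x.val n - y.val n| ≤ 2^k * |x.val (n+k) - y.val (n+k)| := by
  have hs0 : (0:ℝ) ≤ s := by linarith [hs.1]
  induction k with
  | zero => simp
  | succ k ih =>
    have hx := x.2.2 (n+k)
    have hy := y.2.2 (n+k)
    calc |x.val n - y.val n| ≤ 2^k * |x.val (n+k) - y.val (n+k)| := ih
      _ = 2^k * |tent s (x.val (n+k+1)) - tent s (y.val (n+k+1))| := by rw [hx, hy]
      _ ≤ 2^k * (2 * |x.val (n+k+1) - y.val (n+k+1)|) := by
          exact mul_le_mul_of_nonneg_left (tent_lip hs0 hs.2 _ _) (by positivity)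
      _ = 2^(k+1) * |x.val (n+(k+1)) - y.val (n+(k+1))| := by
          rw [show n+(k+1) = n+k+1 from rfl]; ring

lemma coord_abs {s : ℝ} (hs : s ∈ Ioc (1:ℝ) 2) (x y : InvLim s) (n : ℕ) :
    |x.val n - y.val n| ≤ 1 := by
  have hx := x.2.1 n
  have hy := y.2.1 n
  have h2 := hs.2
  rw [abs_sub_le_iff]
  constructor <;> [linarith [hx.1, hx.2, hy.1, hy.2]; linarith [hx.1, hx.2, hy.1, hy.2]]

lemma D_summable {s : ℝ} (hs : s ∈ Ioc (1:ℝ) 2) (x y : InvLim s) :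
    Summable (fun n : ℕ => (2:ℝ)⁻¹ ^ n * |x.val n - y.val n|) := by
  apply Summable.of_nonneg_of_le (fun n => by positivity) (fun n => ?_)
    (summable_geometric_of_lt_one (by norm_num) (by norm_num : (2:ℝ)⁻¹ < 1))
  calc (2:ℝ)⁻¹ ^ n * |x.val n - y.val n| ≤ (2:ℝ)⁻¹ ^ n * 1 :=
        mul_le_mul_of_nonneg_left (coord_abs hs x y n) (by positivity)
    _ = (2:ℝ)⁻¹ ^ n := mul_one _

/-- Every point of `[0, s/2]` lifts to the inverse limit with prescribed `N`-th coordinate. -/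
lemma proj_surj {s : ℝ} (hs : s ∈ Ioc (1:ℝ) 2) (N : ℕ) {t : ℝ} (ht : t ∈ Icc (0:ℝ) (s/2)) :
    ∃ x : InvLim s, x.val N = t := by
  set g : ℝ → ℝ := fun u => u / s with hg
  set p : ℕ → ℝ := fun n => if n ≤ N then (tent s)^[N - n] t else g^[n - N] t with hp
  have hmem : ∀ k, (tent s)^[k] t ∈ Icc (0:ℝ) (s/2) := by
    intro k; induction k with
    | zero => simpa using ht
    | succ k ih => rw [Function.iterate_succ_apply']; exact tent_mem_Icc hs ih
  have hgmem : ∀ k, g^[k] t ∈ Icc (0:ℝ) (s/2) := by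
    intro k; induction k with
    | zero => simpa using ht
    | succ k ih => rw [Function.iterate_succ_apply']; exact div_mem_Icc hs ih
  have hpmem : ∀ n, p n ∈ Icc (0:ℝ) (s/2) := by
    intro n
    by_cases h : n ≤ N
    · simp only [hp, if_pos h]; exact hmem _
    · simp only [hp, if_neg h]; exact hgmem _
  have hcomp : ∀ n, tent s (p (n+1)) = p n := by
    intro n
    rcases lt_trichotomy n N with h | h | h
    · have h1 : n + 1 ≤ N := h
      simp only [hp, if_pos h1, if_pos h.le]
      rw [show N - n = (N - (n+1)) + 1 by omega, Function.iterate_succ_apply']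
    · subst h
      have h1 : ¬ (n + 1 ≤ n) := by omega
      simp only [hp, if_pos (le_refl n), if_neg h1]
      rw [show n + 1 - n = 1 by omega, Nat.sub_self]
      simp only [Function.iterate_one, Function.iterate_zero, id_eq]
      exact tent_div hs ht
    · have h1 : ¬ (n + 1 ≤ N) := by omega
      have h2 : ¬ (n ≤ N) := by omega
      simp only [hp, if_neg h1, if_neg h2]
      rw [show n + 1 - N = (n - N) + 1 by omega, Function.iterate_succ_apply']
      exact tent_div hs (hgmem (n - N))
  refine ⟨⟨p, hpmem, hcomp⟩, ?_⟩
  simp [hp]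

lemma D_bound {s : ℝ} (hs : s ∈ Ioc (1:ℝ) 2) (N : ℕ) (x y : InvLim s) (δ : ℝ)
    (hδ : 0 ≤ δ) (hN : |x.val N - y.val N| ≤ δ) :
    D s x y ≤ ((N:ℝ)+1) * 2^N * δ + (2:ℝ)⁻¹^N := by
  have hsum : Summable (fun n : ℕ => (2:ℝ)⁻¹ ^ n * |x.val n - y.val n|) := D_summable hs x y
  have hsplit : D s x y = ∑ i ∈ Finset.range (N+1), (2:ℝ)⁻¹ ^ i * |x.val i - y.val i|
      + ∑' i : ℕ, (2:ℝ)⁻¹ ^ (i + (N+1)) * |x.val (i + (N+1)) - y.val (i + (N+1))| :=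
    (Summable.sum_add_tsum_nat_add (N+1) hsum).symm
  have head : ∑ i ∈ Finset.range (N+1), (2:ℝ)⁻¹ ^ i * |x.val i - y.val i|
      ≤ ((N:ℝ)+1) * (2^N * δ) := by
    have hterm : ∀ i ∈ Finset.range (N+1),
        (2:ℝ)⁻¹ ^ i * |x.val i - y.val i| ≤ 2^N * δ := by
      intro i hi
      have hiN : i ≤ N := by simpa [Nat.lt_succ_iff] using hi
      have h1 : |x.val i - y.val i| ≤ 2^(N-i) * |x.val N - y.val N| := by
        have := coord_le hs x y i (N - i)
        rwa [show i + (N - i) = N by omega] at this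
      have h2 : (2:ℝ)^(N-i) ≤ 2^N := pow_le_pow_right₀ (by norm_num) (by omega)
      calc (2:ℝ)⁻¹ ^ i * |x.val i - y.val i| ≤ 1 * |x.val i - y.val i| := by
            apply mul_le_mul_of_nonneg_right _ (abs_nonneg _)
            exact pow_le_one₀ (by norm_num) (by norm_num)
        _ = |x.val i - y.val i| := one_mul _
        _ ≤ 2^(N-i) * |x.val N - y.val N| := h1
        _ ≤ 2^N * δ := mul_le_mul h2 hN (abs_nonneg _) (by positivity)
    calc ∑ i ∈ Finset.range (N+1), (2:ℝ)⁻¹ ^ i * |x.val i - y.val i|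
        ≤ ∑ _i ∈ Finset.range (N+1), (2:ℝ)^N * δ := Finset.sum_le_sum hterm
      _ = ((N:ℝ)+1) * (2^N * δ) := by
          rw [Finset.sum_const, Finset.card_range, nsmul_eq_mul]; push_cast; ring
  have tail : ∑' i : ℕ, (2:ℝ)⁻¹ ^ (i + (N+1)) * |x.val (i + (N+1)) - y.val (i + (N+1))|
      ≤ (2:ℝ)⁻¹^N := by
    have hsum2 : Summable (fun i : ℕ => (2:ℝ)⁻¹^(i + (N+1))) := by
      simp_rw [pow_add]
      exact (summable_geometric_of_lt_one (by norm_num) (by norm_num)).mul_right _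
    have hsum1 : Summable (fun i : ℕ =>
        (2:ℝ)⁻¹ ^ (i + (N+1)) * |x.val (i + (N+1)) - y.val (i + (N+1))|) :=
      (summable_nat_add_iff (N+1)).mpr hsum
    have h1 : ∑' i : ℕ, (2:ℝ)⁻¹ ^ (i + (N+1)) * |x.val (i + (N+1)) - y.val (i + (N+1))|
        ≤ ∑' i : ℕ, (2:ℝ)⁻¹^(i + (N+1)) := by
      apply Summable.tsum_le_tsum _ hsum1 hsum2
      intro i
      calc (2:ℝ)⁻¹ ^ (i + (N+1)) * |x.val (i + (N+1)) - y.val (i + (N+1))|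
          ≤ (2:ℝ)⁻¹^(i + (N+1)) * 1 :=
            mul_le_mul_of_nonneg_left (coord_abs hs x y _) (by positivity)
        _ = (2:ℝ)⁻¹^(i + (N+1)) := mul_one _
    have h2 : ∑' i : ℕ, (2:ℝ)⁻¹^(i + (N+1)) = (2:ℝ)⁻¹^N := by
      simp_rw [pow_add]
      rw [tsum_mul_right, tsum_geometric_of_lt_one (by norm_num) (by norm_num)]
      rw [show ((1:ℝ) - 2⁻¹)⁻¹ = 2 by norm_num, pow_succ]
      ring
    linarith
  rw [hsplit]
  calc _ ≤ ((N:ℝ)+1) * (2^N * δ) + (2:ℝ)⁻¹^N := add_le_add head tail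
    _ = ((N:ℝ)+1) * 2^N * δ + (2:ℝ)⁻¹^N := by ring

/-- `K_s` is chainable: for every `ε > 0` there is a finite open cover by links of
`D`-diameter `< ε` in which two links intersect exactly when they are adjacent. -/
theorem invLim_chainable (s : ℝ) (hs : s ∈ Set.Ioc (1:ℝ) 2) :
    ∀ ε > (0:ℝ), ∃ (n : ℕ) (ℓ : Fin n → Set (InvLim s)),
      (∀ i, IsOpen (ℓ i)) ∧
      (⋃ i, ℓ i) = Set.univ ∧
      (∀ i, ∀ x ∈ ℓ i, ∀ y ∈ ℓ i, D s x y < ε) ∧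
      (∀ i j, (ℓ i ∩ ℓ j).Nonempty ↔ |(i : ℤ) - (j : ℤ)| ≤ 1) := by
  intro ε hε
  have hs1 : (1:ℝ) < s := hs.1
  have hs0 : (0:ℝ) < s := by linarith
  set L : ℝ := s / 2 with hLdef
  have hL0 : 0 < L := by positivity
  obtain ⟨N, hN⟩ := exists_pow_lt_of_lt_one (show (0:ℝ) < ε/2 by linarith)
    (show (2:ℝ)⁻¹ < 1 by norm_num)
  obtain ⟨m, hm⟩ := exists_nat_gt (((N:ℝ)+1) * 2^N * (2*L) / (ε/2))
  have hC0 : 0 < ((N:ℝ)+1) * 2^N * (2*L) / (ε/2) := by positivity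
  have hm0 : 0 < (m:ℝ) := lt_trans hC0 hm
  set h : ℝ := L / m with hhdef
  have hh0 : 0 < h := div_pos hL0 hm0
  have hmh : (m:ℝ) * h = L := by rw [hhdef]; exact mul_div_cancel₀ _ hm0.ne'
  have hkey : ((N:ℝ)+1) * 2^N * (2*h) < ε/2 := by
    rw [show ((N:ℝ)+1) * 2^N * (2*h) = ((N:ℝ)+1) * 2^N * (2*L) / m by rw [hhdef]; ring,
      div_lt_iff₀ hm0]
    have := (div_lt_iff₀ (show (0:ℝ) < ε/2 by linarith)).mp hm
    linarith
  refine ⟨m+1, fun i =>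
    {x : InvLim s | x.val N ∈ Ioo ((((i:ℕ):ℝ) - 1) * h) ((((i:ℕ):ℝ) + 1) * h)},
    ?_, ?_, ?_, ?_⟩
  · -- openness
    intro i
    have hc : Continuous (fun x : InvLim s => x.val N) :=
      (continuous_apply N).comp continuous_subtype_val
    exact hc.isOpen_preimage _ isOpen_Ioo
  · -- cover
    ext x
    simp only [mem_iUnion, mem_univ, iff_true, mem_setOf_eq]
    have hu : x.val N ∈ Icc (0:ℝ) L := x.2.1 N
    set u := x.val N with hudef
    have hu0 : 0 ≤ u := hu.1
    set i0 : ℕ := ⌊u / h⌋₊ with hi0def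
    have hdiv : u / h ≤ (m:ℝ) := by
      rw [div_le_iff₀ hh0, hmh]; exact hu.2
    have hi0m : i0 ≤ m := by
      calc i0 ≤ ⌊(m:ℝ)⌋₊ := Nat.floor_le_floor hdiv
        _ = m := Nat.floor_natCast m
    have h1 : (i0:ℝ) * h ≤ u := by
      have := Nat.floor_le (show 0 ≤ u / h by positivity)
      rw [← hi0def] at this
      calc (i0:ℝ) * h ≤ (u / h) * h := mul_le_mul_of_nonneg_right this hh0.le
        _ = u := by field_simp
    have h2 : u < ((i0:ℝ) + 1) * h := by
      have := Nat.lt_floor_add_one (u / h)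
      rw [← hi0def] at this
      calc u = (u / h) * h := by field_simp
        _ < ((i0:ℝ) + 1) * h := mul_lt_mul_of_pos_right this hh0
    refine ⟨⟨i0, by omega⟩, ?_, ?_⟩
    · simp only [Fin.val_mk]; nlinarith
    · simpa only [Fin.val_mk] using h2
  · -- small diameter
    intro i x hx y hy
    simp only [mem_setOf_eq, mem_Ioo] at hx hy
    have hd : |x.val N - y.val N| ≤ 2 * h := by
      rw [abs_sub_le_iff]
      constructor <;> nlinarith [hx.1, hx.2, hy.1, hy.2]
    have := D_bound hs N x y (2*h) (by positivity) hd
    calc D s x y ≤ ((N:ℝ)+1) * 2^N * (2*h) + (2:ℝ)⁻¹^N := this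
      _ < ε/2 + ε/2 := add_lt_add hkey hN
      _ = ε := by ring
  · -- adjacency
    intro i j
    constructor
    · rintro ⟨x, hxi, hxj⟩
      simp only [mem_setOf_eq, mem_Ioo] at hxi hxj
      have hij : ((i:ℕ):ℝ) < ((j:ℕ):ℝ) + 2 := by nlinarith [hxi.1, hxj.2]
      have hji : ((j:ℕ):ℝ) < ((i:ℕ):ℝ) + 2 := by nlinarith [hxj.1, hxi.2]
      have hij' : (i:ℕ) < (j:ℕ) + 2 := by exact_mod_cast hij
      have hji' : (j:ℕ) < (i:ℕ) + 2 := by exact_mod_cast hji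
      rw [abs_le]
      omega
    · intro habs
      rw [abs_le] at habs
      have hij : (i:ℕ) ≤ (j:ℕ) + 1 := by omega
      have hji : (j:ℕ) ≤ (i:ℕ) + 1 := by omega
      have him : (i:ℕ) ≤ m := by omega
      have hjm : (j:ℕ) ≤ m := by omega
      set t : ℝ := (((i:ℕ):ℝ) + ((j:ℕ):ℝ)) * h / 2 with htdef
      have hijR : ((i:ℕ):ℝ) ≤ ((j:ℕ):ℝ) + 1 := by exact_mod_cast hij
      have hjiR : ((j:ℕ):ℝ) ≤ ((i:ℕ):ℝ) + 1 := by exact_mod_cast hji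
      have himR : ((i:ℕ):ℝ) ≤ (m:ℝ) := by exact_mod_cast him
      have hjmR : ((j:ℕ):ℝ) ≤ (m:ℝ) := by exact_mod_cast hjm
      have ht : t ∈ Icc (0:ℝ) L := by
        constructor
        · positivity
        · rw [← hmh]; nlinarith
      obtain ⟨x, hx⟩ := proj_surj hs N ht
      refine ⟨x, ?_, ?_⟩ <;>
        simp only [mem_setOf_eq, mem_Ioo, hx, htdef] <;>
        constructor <;> nlinarith
end
end

section
/- Let A ⊂ K_s be an arc (homeomorphic image of [0,1]) containing only finitely many p-points for some fixed p. Then there exists m ∈ ℕ such that the projection π_m restricted to A is injective. -/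
open Set Filter Topology

noncomputable section

/-- Lower coordinates are determined by higher ones. -/
lemma InvLim.agree {s : ℝ} (x y : InvLim s) :
    ∀ (k j : ℕ), x.val (j + k) = y.val (j + k) → x.val j = y.val j := by
  intro k
  induction k with
  | zero => intro j h; exact h
  | succ k ih =>
    intro j h
    apply ih
    have hx := x.2.2 (j + k)
    have hy := y.2.2 (j + k)
    rw [← hx, ← hy]
    exact congrArg (tent s) h

/-- A fold of the tent map: equal values at distinct points force the points to lie
strictly on opposite sides of `1/2`. -/
lemma tent_fold {s α β : ℝ} (hs1 : 1 < s) (hs2 : s ≤ 2)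
    (hα : α ∈ Icc (0:ℝ) (s/2)) (hβ : β ∈ Icc (0:ℝ) (s/2))
    (hne : α ≠ β) (heq : tent s α = tent s β) :
    (α - 1/2) * (β - 1/2) < 0 := by
  have hs0 : (0:ℝ) < s := by linarith
  have hL : ∀ x : ℝ, x ≤ 1/2 → tent s x = s * x := by
    intro x hx
    exact min_eq_left (mul_le_mul_of_nonneg_left (by linarith) hs0.le)
  have hR : ∀ x : ℝ, 1/2 ≤ x → tent s x = s * (1 - x) := by
    intro x hx
    exact min_eq_right (mul_le_mul_of_nonneg_left (by linarith) hs0.le)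
  rcases le_or_gt α (1/2) with ha | ha <;> rcases le_or_gt β (1/2) with hb | hb
  · rw [hL α ha, hL β hb] at heq
    exact absurd (mul_left_cancel₀ hs0.ne' heq) hne
  · have hα2 : α < 1/2 := by
      rcases lt_or_eq_of_le ha with h | h
      · exact h
      · exfalso
        rw [hL α ha, hR β hb.le] at heq
        have h2 := mul_left_cancel₀ hs0.ne' heq
        rw [← h] at hb; linarith
    exact mul_neg_of_neg_of_pos (by linarith) (by linarith)
  · have hβ2 : β < 1/2 := by
      rcases lt_or_eq_of_le hb with h | h
      · exact h
      · exfalso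
        rw [hR α ha.le, hL β hb] at heq
        have h2 := mul_left_cancel₀ hs0.ne' heq
        rw [← h] at ha; linarith
    exact mul_neg_of_pos_of_neg (by linarith) (by linarith)
  · rw [hR α ha.le, hR β hb.le] at heq
    have h2 := mul_left_cancel₀ hs0.ne' heq
    exact absurd (by linarith : α = β) hne

/-- Core crossing lemma: a continuous function with finitely many `1/2`-points on
`[u,v]` that goes from below `1/2` to above `1/2` has a strict crossing point. -/
lemma crossing_core (G : ℝ → ℝ) (hG : Continuous G) (u v : ℝ) (huv : u < v)
    (hfin : {t ∈ Icc u v | G t = 1/2}.Finite)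
    (hu : G u < 1/2) (hv : 1/2 < G v) :
    ∃ z ∈ Ioo u v, G z = 1/2 ∧ ∃ ε > 0,
      (∀ t ∈ Ioo (z - ε) z, G t < 1/2) ∧ (∀ t ∈ Ioo z (z + ε), 1/2 < G t) := by
  set S : Set ℝ := {t ∈ Icc u v | G t < 1/2} with hSdef
  have hSsub : S ⊆ Icc u v := fun t ht => ht.1
  have hSne : S.Nonempty := ⟨u, ⟨le_refl u, huv.le⟩, hu⟩
  have hSbdd : BddAbove S := BddAbove.mono hSsub bddAbove_Icc
  set z := sSup S with hzdef
  have hzS : ∀ t ∈ S, t ≤ z := fun t ht => le_csSup hSbdd ht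
  have hzle : z ≤ v := csSup_le hSne (fun t ht => ht.1.2)
  have hzge : u ≤ z := hzS u ⟨⟨le_refl u, huv.le⟩, hu⟩
  have hzcl : z ∈ closure S := (isLUB_csSup hSne hSbdd).mem_closure hSne
  have hzle12 : G z ≤ 1/2 := by
    have hclosed : IsClosed {t : ℝ | G t ≤ 1/2} := isClosed_le hG continuous_const
    exact closure_minimal (fun t ht => ht.2.le) hclosed hzcl
  have hzv : z < v := lt_of_le_of_ne hzle (fun h => by rw [h] at hzle12; linarith)
  have hz12 : G z = 1/2 := by
    by_contra hne
    have hlt : G z < 1/2 := lt_of_le_of_ne hzle12 hne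
    have hmem : {t : ℝ | G t < 1/2} ∈ 𝓝 z :=
      (isOpen_lt hG continuous_const).mem_nhds hlt
    obtain ⟨δ, hδ, hball⟩ := Metric.mem_nhds_iff.mp hmem
    set t := min (z + δ/2) ((z + v)/2) with htdef
    have htz : z < t := lt_min (by linarith) (by linarith)
    have htv : t < v := lt_of_le_of_lt (min_le_right _ _) (by linarith)
    have htb : t ∈ Metric.ball z δ := by
      have h1 : t ≤ z + δ/2 := min_le_left _ _
      simp only [Metric.mem_ball, Real.dist_eq]
      rw [abs_of_pos (by linarith)]
      linarith
    have htS : t ∈ S := ⟨⟨hzge.trans htz.le, htv.le⟩, hball htb⟩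
    linarith [hzS t htS]
  have hzu : u < z := lt_of_le_of_ne hzge (fun h => by rw [← h] at hz12; linarith)
  have hzmem : z ∈ Ioo u v := ⟨hzu, hzv⟩
  set W : Set ℝ := Ioo u v ∩ ({t ∈ Icc u v | G t = 1/2} \ {z})ᶜ with hWdef
  have hWopen : IsOpen W :=
    isOpen_Ioo.inter ((hfin.diff : ({t ∈ Icc u v | G t = 1/2} \ {z}).Finite).isClosed.isOpen_compl)
  have hzW : z ∈ W := ⟨hzmem, fun hc => hc.2 rfl⟩
  obtain ⟨ε, hε, hball⟩ := Metric.isOpen_iff.mp hWopen z hzW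
  refine ⟨z, hzmem, hz12, ε, hε, ?_, ?_⟩
  · -- left side
    obtain ⟨t₀, ht₀S, ht₀gt⟩ := exists_lt_of_lt_csSup hSne (by linarith : z - ε < sSup S)
    have ht₀z : t₀ < z := by
      rcases lt_or_eq_of_le (hzS t₀ ht₀S) with h | h
      · exact h
      · exfalso
        have h2 := ht₀S.2
        rw [h, hz12] at h2
        linarith
    intro t htI
    by_contra hge
    push_neg at hge
    have htb : t ∈ Metric.ball z ε := by
      simp only [Metric.mem_ball, Real.dist_eq]
      rw [abs_of_neg (by linarith [htI.2] : t - z < 0)]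
      linarith [htI.1]
    have htW := hball htb
    have htne : G t ≠ 1/2 := fun h => htW.2 ⟨⟨⟨htW.1.1.le, htW.1.2.le⟩, h⟩, ne_of_lt htI.2⟩
    have hgt : 1/2 < G t := lt_of_le_of_ne hge (Ne.symm htne)
    have hcontra : ∀ ξ : ℝ, z - ε < ξ → ξ < z → G ξ = 1/2 → False := by
      intro ξ hξl hξz hξG
      have hξb : ξ ∈ Metric.ball z ε := by
        simp only [Metric.mem_ball, Real.dist_eq]
        rw [abs_of_neg (by linarith)]
        linarith
      have hξW := hball hξb
      exact hξW.2 ⟨⟨⟨hξW.1.1.le, hξW.1.2.le⟩, hξG⟩, ne_of_lt hξz⟩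
    rcases le_total t₀ t with hle | hle
    · obtain ⟨ξ, hξI, hξG⟩ := intermediate_value_Icc hle hG.continuousOn
        (⟨ht₀S.2.le, hgt.le⟩ : (1:ℝ)/2 ∈ Icc (G t₀) (G t))
      exact hcontra ξ (lt_of_lt_of_le ht₀gt hξI.1)
        (lt_of_le_of_lt hξI.2 htI.2) hξG
    · obtain ⟨ξ, hξI, hξG⟩ := intermediate_value_Icc' hle hG.continuousOn
        (⟨ht₀S.2.le, hgt.le⟩ : (1:ℝ)/2 ∈ Icc (G t₀) (G t))
      exact hcontra ξ (lt_of_lt_of_le htI.1 hξI.1)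
        (lt_of_le_of_lt hξI.2 ht₀z) hξG
  · -- right side
    intro t htI
    have htb : t ∈ Metric.ball z ε := by
      simp only [Metric.mem_ball, Real.dist_eq]
      rw [abs_of_pos (by linarith [htI.1] : (0:ℝ) < t - z)]
      linarith [htI.2]
    have htW := hball htb
    have htne : G t ≠ 1/2 := fun h => htW.2 ⟨⟨⟨htW.1.1.le, htW.1.2.le⟩, h⟩, ne_of_gt htI.1⟩
    by_contra hle
    push_neg at hle
    have htS : t ∈ S := ⟨⟨htW.1.1.le, htW.1.2.le⟩, lt_of_le_of_ne hle htne⟩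
    linarith [hzS t htS, htI.1]

/-- Orientation-free crossing lemma. -/
lemma crossing (G : ℝ → ℝ) (hG : Continuous G) (u v : ℝ) (huv : u < v)
    (hfin : {t ∈ Icc u v | G t = 1/2}.Finite)
    (hprod : (G u - 1/2) * (G v - 1/2) < 0) :
    ∃ z ∈ Ioo u v, G z = 1/2 ∧ ∃ ε > 0,
      ∀ t ∈ Ioo (z - ε) z, ∀ t' ∈ Ioo z (z + ε), (G t - 1/2) * (G t' - 1/2) < 0 := by
  rcases mul_neg_iff.mp hprod with ⟨h1, h2⟩ | ⟨h1, h2⟩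
  · -- G u > 1/2 > G v : use 1 - G
    have hfin' : {t ∈ Icc u v | (fun t => 1 - G t) t = 1/2}.Finite := by
      have hset : {t ∈ Icc u v | (fun t => 1 - G t) t = 1/2} = {t ∈ Icc u v | G t = 1/2} := by
        ext t
        simp only [mem_setOf_eq]
        constructor
        · rintro ⟨h, h'⟩; exact ⟨h, by linarith⟩
        · rintro ⟨h, h'⟩; exact ⟨h, by linarith⟩
      rw [hset]; exact hfin
    obtain ⟨z, hzm, hz12, ε, hε, hLft, hRgt⟩ :=
      crossing_core (fun t => 1 - G t) (continuous_const.sub hG) u v huv hfin'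
        (show (1:ℝ) - G u < 1/2 by linarith) (show (1:ℝ)/2 < 1 - G v by linarith)
    refine ⟨z, hzm, by simpa using (by linarith [hz12] : G z = 1/2), ε, hε, ?_⟩
    intro t ht t' ht'
    have hl := hLft t ht
    have hr := hRgt t' ht'
    nlinarith
  · obtain ⟨z, hzm, hz12, ε, hε, hLft, hRgt⟩ :=
      crossing_core G hG u v huv hfin (by linarith) (by linarith)
    refine ⟨z, hzm, hz12, ε, hε, ?_⟩
    intro t ht t' ht'
    have hl := hLft t ht
    have hr := hRgt t' ht'
    nlinarith

/-- Accumulating coincidence pairs force two distinct parameters with the same image. -/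
lemma limit_contra {s : ℝ} (f : Set.Icc (0:ℝ) 1 → InvLim s) (hfi : Function.Injective f)
    (F : ℕ → ℝ → ℝ) (hFcont : ∀ j, Continuous (F j))
    (hFval : ∀ (t : ℝ) (ht : t ∈ Icc (0:ℝ) 1), ∀ j, F j t = (f ⟨t, ht⟩).val j)
    (U V : ℕ → ℝ) (hU : ∀ k, U k ∈ Icc (0:ℝ) 1) (hV : ∀ k, V k ∈ Icc (0:ℝ) 1)
    (N : Set ℕ) (hN : N.Infinite)
    (hagree : ∀ k ∈ N, ∀ j ≤ k, F j (U k) = F j (V k))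
    (c c' : ℝ) (hcc : c < c')
    (hUc : ∀ k ∈ N, U k ≤ c) (hVc : ∀ k ∈ N, c' ≤ V k) : False := by
  classical
  have hNs : {k | k ∈ N}.Infinite := hN
  set e : ℕ → ℕ := Nat.nth (· ∈ N) with he
  have hemem : ∀ k, e k ∈ N := fun k => Nat.nth_mem_of_infinite hNs k
  have hemono : StrictMono e := Nat.nth_strictMono hNs
  obtain ⟨x, hxI, φ₁, hφ₁, hTx⟩ := isCompact_Icc.tendsto_subseq (fun k => hU (e k))
  obtain ⟨y, hyI, φ₂, hφ₂, hTy⟩ :=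
    isCompact_Icc.tendsto_subseq (x := fun k => V (e (φ₁ k))) (fun k => hV (e (φ₁ k)))
  have hTx' : Tendsto (fun k => U (e (φ₁ (φ₂ k)))) atTop (𝓝 x) :=
    hTx.comp hφ₂.tendsto_atTop
  have hTy' : Tendsto (fun k => V (e (φ₁ (φ₂ k)))) atTop (𝓝 y) := hTy
  set ψ : ℕ → ℕ := fun k => e (φ₁ (φ₂ k)) with hψ
  have hψge : ∀ k, k ≤ ψ k := fun k =>
    le_trans (le_trans hφ₂.le_apply hφ₁.le_apply) hemono.le_apply
  have hkey : ∀ j, F j x = F j y := by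
    intro j
    have h1 : Tendsto (fun k => F j (U (ψ k))) atTop (𝓝 (F j x)) :=
      ((hFcont j).tendsto x).comp hTx'
    have h2 : Tendsto (fun k => F j (V (ψ k))) atTop (𝓝 (F j y)) :=
      ((hFcont j).tendsto y).comp hTy'
    have heq : (fun k => F j (U (ψ k))) =ᶠ[atTop] (fun k => F j (V (ψ k))) := by
      filter_upwards [eventually_ge_atTop j] with k hk
      exact hagree (ψ k) (hemem _) j (le_trans hk (hψge k))
    exact tendsto_nhds_unique (h1.congr' heq) h2
  have hxy : (⟨x, hxI⟩ : Set.Icc (0:ℝ) 1) = ⟨y, hyI⟩ := by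
    apply hfi
    apply Subtype.ext
    funext j
    rw [← hFval x hxI j, ← hFval y hyI j, hkey j]
  have hxeqy : x = y := congrArg Subtype.val hxy
  have hxc : x ≤ c := le_of_tendsto hTx' (Eventually.of_forall fun k => hUc _ (hemem _))
  have hyc : c' ≤ y := ge_of_tendsto hTy' (Eventually.of_forall fun k => hVc _ (hemem _))
  linarith

/-- If an arc `A ⊆ K_s` contains only finitely many `p`-points for some fixed `p`,
then some projection `π_m` is injective on `A`. -/
theorem projection_injective_on_arc (s : ℝ) (hs : s ∈ Set.Ioc (1:ℝ) 2)
    (A : Set (InvLim s))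
    (harc : ∃ f : Set.Icc (0:ℝ) 1 → InvLim s,
      Continuous f ∧ Function.Injective f ∧ Set.range f = A)
    (p : ℕ)
    (hfin : {x ∈ A | ∃ l : ℕ, x.val (p + l) = 1 / 2}.Finite) :
    ∃ m : ℕ, Set.InjOn (fun x : InvLim s => x.val m) A := by
  classical
  obtain ⟨f, hfc, hfi, hfr⟩ := harc
  obtain ⟨hs1, hs2⟩ := hs
  by_contra hcon
  push_neg at hcon
  -- extended coordinate projections
  set F : ℕ → ℝ → ℝ := fun n t => (f (projIcc (0:ℝ) 1 zero_le_one t)).val n with hFdef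
  have hFcont : ∀ n, Continuous (F n) := fun n =>
    ((continuous_apply n).comp continuous_subtype_val).comp (hfc.comp continuous_projIcc)
  have hFval : ∀ (t : ℝ) (ht : t ∈ Icc (0:ℝ) 1), ∀ n, F n t = (f ⟨t, ht⟩).val n := by
    intro t ht n
    simp only [hFdef]
    rw [projIcc_of_mem _ ht]
  -- the finite set of p-point parameters
  set T : Set ℝ := Subtype.val '' (f ⁻¹' {x ∈ A | ∃ l : ℕ, x.val (p + l) = 1 / 2}) with hTdef
  have hTfin : T.Finite := (hfin.preimage hfi.injOn).image _
  have hTZ : ∀ n, p ≤ n → ∀ t, t ∈ Icc (0:ℝ) 1 → F n t = 1/2 → t ∈ T := by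
    intro n hn t ht hFt
    refine ⟨⟨t, ht⟩, ?_, rfl⟩
    refine ⟨by rw [← hfr]; exact mem_range_self _, ⟨n - p, ?_⟩⟩
    rw [(by omega : p + (n - p) = n), ← hFval t ht n]
    exact hFt
  -- witnesses of non-injectivity at each level p + k
  have H : ∀ k : ℕ, ∃ a b : Set.Icc (0:ℝ) 1, a ≠ b ∧
      (f a).val (p + k) = (f b).val (p + k) := by
    intro k
    have hni := hcon (p + k)
    rw [Set.InjOn] at hni
    push_neg at hni
    obtain ⟨x, hx, y, hy, hxy, hne⟩ := hni
    rw [← hfr] at hx hy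
    obtain ⟨a, rfl⟩ := hx
    obtain ⟨b, rfl⟩ := hy
    exact ⟨a, b, fun h => hne (congrArg f h), hxy⟩
  choose a b hab hval using H
  have hvne : ∀ k, (a k).1 ≠ (b k).1 := fun k h => hab k (Subtype.ext h)
  set u : ℕ → ℝ := fun k => min (a k).1 (b k).1 with hudef
  set v : ℕ → ℝ := fun k => max (a k).1 (b k).1 with hvdef
  have huv : ∀ k, u k < v k := fun k => min_lt_max.mpr (hvne k)
  have huI : ∀ k, u k ∈ Icc (0:ℝ) 1 := fun k =>
    ⟨le_min (a k).2.1 (b k).2.1, (min_le_left _ _).trans (a k).2.2⟩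
  have hvI : ∀ k, v k ∈ Icc (0:ℝ) 1 := fun k =>
    ⟨le_trans (a k).2.1 (le_max_left _ _), max_le (a k).2.2 (b k).2.2⟩
  have hFa : ∀ k j, F j (a k).1 = (f (a k)).val j := by
    intro k j
    rw [hFval (a k).1 (a k).2 j]
  have hFb : ∀ k j, F j (b k).1 = (f (b k)).val j := by
    intro k j
    rw [hFval (b k).1 (b k).2 j]
  -- agreement up to level p + k
  have hagree : ∀ k j, j ≤ p + k → F j (u k) = F j (v k) := by
    intro k j hj
    have h1 : (f (a k)).val j = (f (b k)).val j := by
      apply InvLim.agree (f (a k)) (f (b k)) (p + k - j) j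
      rw [(by omega : j + (p + k - j) = p + k)]
      exact hval k
    rcases le_total (a k).1 (b k).1 with hle | hle
    · simp only [hudef, hvdef, min_eq_left hle, max_eq_right hle, hFa, hFb, h1]
    · simp only [hudef, hvdef, min_eq_right hle, max_eq_left hle, hFa, hFb, h1]
  -- first disagreement level
  have hex : ∀ k, ∃ n, (f (a k)).val n ≠ (f (b k)).val n := by
    intro k
    by_contra hc
    push_neg at hc
    exact hab k (hfi (Subtype.ext (funext hc)))
  set n : ℕ → ℕ := fun k => Nat.find (hex k) with hndef
  have hnspec : ∀ k, (f (a k)).val (n k) ≠ (f (b k)).val (n k) := fun k => Nat.find_spec (hex k)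
  have hnmin : ∀ k j, j < n k → (f (a k)).val j = (f (b k)).val j := fun k j hj =>
    not_not.mp (Nat.find_min (hex k) hj)
  have hnlt : ∀ k, p + k < n k := by
    intro k
    by_contra hc
    push_neg at hc
    apply hnspec k
    apply InvLim.agree (f (a k)) (f (b k)) (p + k - n k) (n k)
    rw [(by omega : n k + (p + k - n k) = p + k)]
    exact hval k
  -- the fold at the first disagreement level
  have hfold : ∀ k, ((f (a k)).val (n k) - 1/2) * ((f (b k)).val (n k) - 1/2) < 0 := by
    intro k
    have h1 : n k - 1 + 1 = n k := by have := hnlt k; omega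
    have hta := (f (a k)).2.2 (n k - 1)
    have htb := (f (b k)).2.2 (n k - 1)
    rw [h1] at hta htb
    have heq2 : tent s ((f (a k)).val (n k)) = tent s ((f (b k)).val (n k)) := by
      rw [hta, htb]
      exact hnmin k (n k - 1) (by omega)
    exact tent_fold hs1 hs2 ((f (a k)).2.1 (n k)) ((f (b k)).2.1 (n k)) (hnspec k) heq2
  have hprod : ∀ k, (F (n k) (u k) - 1/2) * (F (n k) (v k) - 1/2) < 0 := by
    intro k
    rcases le_total (a k).1 (b k).1 with hle | hle
    · simp only [hudef, hvdef, min_eq_left hle, max_eq_right hle, hFa, hFb]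
      exact hfold k
    · simp only [hudef, hvdef, min_eq_right hle, max_eq_left hle, hFa, hFb]
      rw [mul_comm]
      exact hfold k
  have hnp : ∀ k, p ≤ n k := fun k => le_of_lt (lt_of_le_of_lt (Nat.le_add_right p k) (hnlt k))
  -- the strict crossings
  have HC : ∀ k, ∃ z ∈ Ioo (u k) (v k), F (n k) z = 1/2 ∧ ∃ ε > 0,
      ∀ t ∈ Ioo (z - ε) z, ∀ t' ∈ Ioo z (z + ε),
        (F (n k) t - 1/2) * (F (n k) t' - 1/2) < 0 := by
    intro k
    apply crossing (F (n k)) (hFcont _) _ _ (huv k) ?_ (hprod k)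
    apply hTfin.subset
    rintro t ⟨htI, htF⟩
    exact hTZ (n k) (hnp k) t ⟨(huI k).1.trans htI.1, htI.2.trans (hvI k).2⟩ htF
  choose z hzmem hz50 ε hε hsign using HC
  have hzI : ∀ k, z k ∈ Icc (0:ℝ) 1 := fun k =>
    ⟨(huI k).1.trans (hzmem k).1.le, (hzmem k).2.le.trans (hvI k).2⟩
  have hzT : ∀ k, z k ∈ T := fun k => hTZ (n k) (hnp k) (z k) (hzI k) (hz50 k)
  -- pigeonhole
  haveI := hTfin.to_subtype
  obtain ⟨⟨τ, hτT⟩, hinf⟩ := Finite.exists_infinite_fiber (fun k => (⟨z k, hzT k⟩ : T))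
  have hM : {k | z k = τ}.Infinite := by
    have h1 : ((fun k => (⟨z k, hzT k⟩ : T)) ⁻¹' {⟨τ, hτT⟩}).Infinite :=
      Set.infinite_coe_iff.mp hinf
    have h2 : ((fun k => (⟨z k, hzT k⟩ : T)) ⁻¹' {⟨τ, hτT⟩}) = {k | z k = τ} := by
      ext k
      simp [Subtype.ext_iff]
    rwa [h2] at h1
  obtain ⟨k₀, hk₀⟩ := hM.nonempty
  have hk₀' : z k₀ = τ := hk₀
  have sign₀ : ∀ t ∈ Ioo (τ - ε k₀) τ, ∀ t' ∈ Ioo τ (τ + ε k₀),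
      (F (n k₀) t - 1/2) * (F (n k₀) t' - 1/2) < 0 := by
    rw [← hk₀']
    exact hsign k₀
  by_cases hA : ∃ k, z k = τ ∧ n k₀ ≤ p + k ∧ τ - ε k₀ < u k ∧ v k < τ + ε k₀
  · obtain ⟨k, hkM, hk1, hk2, hk3⟩ := hA
    have he : F (n k₀) (u k) = F (n k₀) (v k) := hagree k (n k₀) hk1
    have hu' : u k ∈ Ioo (τ - ε k₀) τ := ⟨hk2, hkM ▸ (hzmem k).1⟩
    have hv' : v k ∈ Ioo τ (τ + ε k₀) := ⟨hkM ▸ (hzmem k).2, hk3⟩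
    have := sign₀ _ hu' _ hv'
    rw [he] at this
    exact absurd this (not_lt.mpr (mul_self_nonneg _))
  · push_neg at hA
    -- hA : ∀ k, z k = τ → n k₀ ≤ p + k → τ - ε k₀ < u k → τ + ε k₀ ≤ v k
    set M' : Set ℕ := {k | z k = τ ∧ n k₀ ≤ p + k} with hM'def
    have hM' : M'.Infinite := by
      apply Set.Infinite.mono (t := M') (s := {k | z k = τ} \ {k | p + k < n k₀})
      · rintro k ⟨h1, h2⟩
        exact ⟨h1, by simpa using h2⟩
      · apply hM.diff
        apply (Set.finite_Iio (n k₀)).subset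
        intro k hk
        simp only [mem_setOf_eq] at hk
        simp only [mem_Iio]
        omega
    have hsplit : M' ⊆ {k | k ∈ M' ∧ u k ≤ τ - ε k₀} ∪ {k | k ∈ M' ∧ τ + ε k₀ ≤ v k} := by
      intro k hk
      rcases le_or_gt (u k) (τ - ε k₀) with h | h
      · exact Or.inl ⟨hk, h⟩
      · exact Or.inr ⟨hk, hA k hk.1 hk.2 h⟩
    have hor : ({k | k ∈ M' ∧ u k ≤ τ - ε k₀}).Infinite ∨
        ({k | k ∈ M' ∧ τ + ε k₀ ≤ v k}).Infinite := by
      by_contra hc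
      push_neg at hc
      exact (hM'.mono hsplit) (hc.1.union hc.2)
    have hagree' : ∀ (N : Set ℕ), N ⊆ M' → ∀ k ∈ N, ∀ j ≤ k, F j (u k) = F j (v k) := by
      intro N hNM k _ j hj
      exact hagree k j (by omega)
    rcases hor with hinf' | hinf'
    · refine limit_contra f hfi F hFcont hFval u v huI hvI _ hinf'
        (fun k hk j hj => hagree k j (by omega)) (τ - ε k₀) τ (by linarith [hε k₀]) ?_ ?_
      · intro k hk
        exact hk.2
      · intro k hk
        have : z k = τ := hk.1.1
        linarith [(hzmem k).2, this ▸ (hzmem k).2]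
    · refine limit_contra f hfi F hFcont hFval u v huI hvI _ hinf'
        (fun k hk j hj => hagree k j (by omega)) τ (τ + ε k₀) (by linarith [hε k₀]) ?_ ?_
      · intro k hk
        have : z k = τ := hk.1.1
        linarith [this ▸ (hzmem k).1]
      · intro k hk
        exact hk.2
end
end
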